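/- Let L be a bounded lattice, φ : L → [0,1] order-preserving with φ(𝟬) = 0, φ(𝟭) = 1 and φ(A ∨ B) ≤ φ(A) + φ(B), and 1 ≤ p < ∞. Then the space L^p(L, φ) endowed with the relation ≤ defined via the closed positive cone C₊ is a partially ordered vector space (≤ is reflexive, transitive, antisymmetric, x ≤ y implies x + z ≤ y + z for all z, and 0 ≤ x implies 0 ≤ a·x for all a ≥ 0), and it has the property that 0 ≤ x ≤ y implies ‖x‖ ≤ ‖y‖. -/

import Mathlib

/-- The subspace `Δ ⊆ c₀₀(L)` spanned by `e_𝟬` and the vectors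
`(e_A + e_B) − (e_{A∨B} + e_{A∧B})`. -/
noncomputable def deltaSpan (L : Type*) [Lattice L] [BoundedOrder L] :
    Submodule ℝ (L →₀ ℝ) :=
  Submodule.span ℝ
    ({Finsupp.single (⊥ : L) (1 : ℝ)} ∪
      {f : L →₀ ℝ | ∃ A B : L,
        f = Finsupp.single A 1 + Finsupp.single B 1
          - (Finsupp.single (A ⊔ B) 1 + Finsupp.single (A ⊓ B) 1)})

/-- The quotient space `X = c₀₀(L)/Δ`. -/
abbrev XSpace (L : Type*) [Lattice L] [BoundedOrder L] :=
  (L →₀ ℝ) ⧸ deltaSpan L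

/-- The element `a ⊗ A := q(a·e_A)` of `X`. -/
noncomputable def tens (L : Type*) [Lattice L] [BoundedOrder L] (a : ℝ) (A : L) :
    XSpace L :=
  Submodule.Quotient.mk (Finsupp.single A a)

/-- The smallest preorder `⊑` on `X` that is translation invariant, invariant under
multiplication by positive scalars, and satisfies `a ⊗ A ⊑ b ⊗ A` for `a ≤ b` and
`1 ⊗ A ⊑ 1 ⊗ B` for `A ≤ B`. -/
inductive SqLe (L : Type*) [Lattice L] [BoundedOrder L] : XSpace L → XSpace L → Prop
  | refl (x : XSpace L) : SqLe L x x
  | trans {x y z : XSpace L} : SqLe L x y → SqLe L y z → SqLe L x z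
  | add_right {x y : XSpace L} (z : XSpace L) : SqLe L x y → SqLe L (x + z) (y + z)
  | smul_pos {x y : XSpace L} (c : ℝ) : 0 < c → SqLe L x y → SqLe L (c • x) (c • y)
  | coeff (a b : ℝ) (A : L) : a ≤ b → SqLe L (tens L a A) (tens L b A)
  | mono (A B : L) : A ≤ B → SqLe L (tens L 1 A) (tens L 1 B)

/-- The `L^p(L, φ)`-seminorm on `X`:
`‖x‖ = inf { (∑ₖ |bₖ|^p φ(Bₖ))^{1/p} : ±x ⊑ ∑ₖ |bₖ| ⊗ Bₖ }`,
the infimum taken over finite families `(bₖ) ⊆ ℝ`, `(Bₖ) ⊆ L`. -/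
noncomputable def lpSeminorm (L : Type*) [Lattice L] [BoundedOrder L]
    (φ : L → ℝ) (p : ℝ) (x : XSpace L) : ℝ :=
  sInf {r : ℝ | ∃ (n : ℕ) (b : Fin n → ℝ) (B : Fin n → L),
    SqLe L x (∑ k, tens L |b k| (B k)) ∧
    SqLe L (-x) (∑ k, tens L |b k| (B k)) ∧
    r = (∑ k, |b k| ^ p * φ (B k)) ^ (1 / p)}

section Aux
variable {L : Type*} [Lattice L] [BoundedOrder L]

lemma sqle_add {x y z w : XSpace L} (h1 : SqLe L x y) (h2 : SqLe L z w) :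
    SqLe L (x + z) (y + w) := by
  have a1 := SqLe.add_right z h1
  have a2 := SqLe.add_right y h2
  rw [add_comm z y, add_comm w y] at a2
  exact a1.trans a2

lemma neg_tens (a : ℝ) (A : L) : -(tens L a A) = tens L (-a) A := by
  unfold tens
  rw [Finsupp.single_neg]
  simp

lemma exists_dom (y : XSpace L) :
    ∃ (n : ℕ) (b : Fin n → ℝ) (B : Fin n → L),
      SqLe L y (∑ k, tens L |b k| (B k)) ∧ SqLe L (-y) (∑ k, tens L |b k| (B k)) := by
  obtain ⟨f, rfl⟩ := Submodule.Quotient.mk_surjective _ y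
  induction f using Finsupp.induction with
  | zero =>
    exact ⟨0, ![], ![], by simpa using SqLe.refl 0, by simpa using SqLe.refl 0⟩
  | single_add A a g hA ha ih =>
    obtain ⟨n, b, B, h1, h2⟩ := ih
    refine ⟨n + 1, (Fin.cons a b : Fin (n+1) → ℝ), (Fin.cons A B : Fin (n+1) → L), ?_, ?_⟩
    · have hs : (∑ k : Fin (n+1), tens L |(Fin.cons a b : Fin (n+1) → ℝ) k| ((Fin.cons A B : Fin (n+1) → L) k))
          = tens L |a| A + ∑ k : Fin n, tens L |b k| (B k) := by
        rw [Fin.sum_univ_succ]; simp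
      rw [hs]
      have hmk : (Submodule.Quotient.mk (Finsupp.single A a + g) : XSpace L)
          = tens L a A + Submodule.Quotient.mk g := by
        rw [Submodule.Quotient.mk_add]; rfl
      rw [hmk]
      exact sqle_add (SqLe.coeff a |a| A (le_abs_self a)) h1
    · have hs : (∑ k : Fin (n+1), tens L |(Fin.cons a b : Fin (n+1) → ℝ) k| ((Fin.cons A B : Fin (n+1) → L) k))
          = tens L |a| A + ∑ k : Fin n, tens L |b k| (B k) := by
        rw [Fin.sum_univ_succ]; simp
      rw [hs]
      have hmk : -(Submodule.Quotient.mk (Finsupp.single A a + g) : XSpace L)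
          = tens L (-a) A + -(Submodule.Quotient.mk g) := by
        rw [Submodule.Quotient.mk_add, neg_add, ← neg_tens]; rfl
      rw [hmk]
      exact sqle_add (SqLe.coeff (-a) |a| A (neg_le_abs a)) h2

lemma seminorm_mono (φ : L → ℝ) (hφ0 : ∀ A, 0 ≤ φ A) (p : ℝ)
    {x y : XSpace L} (h0 : SqLe L 0 x) (hxy : SqLe L x y) :
    lpSeminorm L φ p x ≤ lpSeminorm L φ p y := by
  unfold lpSeminorm
  apply csInf_le_csInf
  · refine ⟨0, ?_⟩
    rintro r ⟨n, b, B, -, -, rfl⟩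
    exact Real.rpow_nonneg (Finset.sum_nonneg fun k _ =>
      mul_nonneg (Real.rpow_nonneg (abs_nonneg _) _) (hφ0 _)) _
  · obtain ⟨n, b, B, h1, h2⟩ := exists_dom y
    exact ⟨_, n, b, B, h1, h2, rfl⟩
  · rintro r ⟨n, b, B, h1, h2, hr⟩
    have hxS := hxy.trans h1
    have h0S := h0.trans hxS
    have hnx : SqLe L (-x) 0 := by
      have := SqLe.add_right (-x) h0
      simpa using this
    exact ⟨n, b, B, hxS, hnx.trans h0S, hr⟩

end Aux

/-- Let `L` be a bounded lattice, `φ : L → [0,1]` an order-preserving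
submeasure and `1 ≤ p < ∞`. In any realization of `L^p(L, φ)` — i.e. a complete normed
space `E` together with a linear map `j` from `X` whose norm is the `L^p(L,φ)`-seminorm
(so that `E` is the completion of `X/ker‖·‖`) — the order `x ≤ y ↔ y − x ∈ C₊` defined
by the closed cone `C₊ = closure (j '' {x : 0 ⊑ x})` makes `E` a partially ordered vector
space (reflexive, transitive, antisymmetric, translation invariant, and invariant under
multiplication by nonnegative scalars), and `0 ≤ x ≤ y` implies `‖x‖ ≤ ‖y‖`. -/
theorem lp_space_ordered_vector_space {L : Type*} [Lattice L] [BoundedOrder L]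
    (φ : L → ℝ) (hmono : Monotone φ)
    (hφ0 : ∀ A, 0 ≤ φ A) (hφ1 : ∀ A, φ A ≤ 1)
    (hbot : φ ⊥ = 0) (htop : φ ⊤ = 1)
    (hsub : ∀ A B : L, φ (A ⊔ B) ≤ φ A + φ B)
    (p : ℝ) (hp : 1 ≤ p)
    (E : Type*) [NormedAddCommGroup E] [NormedSpace ℝ E] [CompleteSpace E]
    (j : XSpace L →ₗ[ℝ] E)
    (hj : ∀ x : XSpace L, ‖j x‖ = lpSeminorm L φ p x)
    (hdense : DenseRange ⇑j) :
    ∀ le : E → E → Prop,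
      (∀ x y : E, le x y ↔ y - x ∈ closure (⇑j '' {z : XSpace L | SqLe L 0 z})) →
      (∀ x : E, le x x) ∧
      (∀ x y z : E, le x y → le y z → le x z) ∧
      (∀ x y : E, le x y → le y x → x = y) ∧
      (∀ x y z : E, le x y → le (x + z) (y + z)) ∧
      (∀ (a : ℝ) (x : E), 0 ≤ a → le 0 x → le 0 (a • x)) ∧
      (∀ x y : E, le 0 x → le x y → ‖x‖ ≤ ‖y‖) := by
  intro le hle
  set P : Set (XSpace L) := {z : XSpace L | SqLe L 0 z} with hP
  set C : Set E := closure (⇑j '' P) with hC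
  have hPadd : ∀ a b : XSpace L, a ∈ P → b ∈ P → a + b ∈ P := by
    intro a b ha hb
    have h2 : SqLe L (0 + a) (b + a) := SqLe.add_right a hb
    rw [zero_add, add_comm b a] at h2
    exact SqLe.trans ha h2
  have hzeroC : (0 : E) ∈ C := subset_closure ⟨0, SqLe.refl 0, map_zero j⟩
  have hCadd : ∀ u v : E, u ∈ C → v ∈ C → u + v ∈ C := by
    intro u v hu hv
    rw [hC, mem_closure_iff_seq_limit] at hu hv ⊢
    obtain ⟨s, hs, hsl⟩ := hu
    obtain ⟨t, ht, htl⟩ := hv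
    refine ⟨fun n => s n + t n, fun n => ?_, hsl.add htl⟩
    obtain ⟨a, ha, hja⟩ := hs n
    obtain ⟨b, hb, hjb⟩ := ht n
    exact ⟨a + b, hPadd a b ha hb, by rw [map_add, hja, hjb]⟩
  have keyNorm : ∀ u v : E, u ∈ C → v - u ∈ C → ‖u‖ ≤ ‖v‖ := by
    intro u v hu hvu
    rw [hC, mem_closure_iff_seq_limit] at hu hvu
    obtain ⟨s, hs, hsl⟩ := hu
    obtain ⟨t, ht, htl⟩ := hvu
    choose a ha hja using hs
    choose b hb hjb using ht
    have hnle : ∀ n, ‖s n‖ ≤ ‖s n + t n‖ := by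
      intro n
      rw [← hja n, ← hjb n, ← map_add, hj, hj]
      refine seminorm_mono φ hφ0 p (ha n) ?_
      have h2 := SqLe.add_right (a n) (hb n)
      rwa [zero_add, add_comm] at h2
    have hlim : Filter.Tendsto (fun n => s n + t n) Filter.atTop (nhds v) := by
      have h3 := hsl.add htl
      simpa using h3
    exact le_of_tendsto_of_tendsto' hsl.norm hlim.norm hnle
  refine ⟨?_, ?_, ?_, ?_, ?_, ?_⟩
  · intro x
    rw [hle]
    simpa using hzeroC
  · intro x y z hxy hyz
    rw [hle] at hxy hyz ⊢
    have := hCadd _ _ hyz hxy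
    rwa [sub_add_sub_cancel] at this
  · intro x y hxy hyx
    rw [hle] at hxy hyx
    have h0 : ‖y - x‖ ≤ ‖(0 : E)‖ := by
      refine keyNorm (y - x) 0 hxy ?_
      rw [zero_sub, neg_sub]
      exact hyx
    rw [norm_zero] at h0
    have h4 : y - x = 0 := norm_le_zero_iff.mp h0
    exact (sub_eq_zero.mp h4).symm
  · intro x y z hxy
    rw [hle] at hxy ⊢
    simpa using hxy
  · intro a x ha hx
    rw [hle] at hx ⊢
    rw [sub_zero] at hx ⊢
    rcases eq_or_lt_of_le ha with rfl | hpos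
    · rw [zero_smul]; exact hzeroC
    · rw [mem_closure_iff_seq_limit] at hx ⊢
      obtain ⟨s, hs, hsl⟩ := hx
      refine ⟨fun n => a • s n, fun n => ?_, hsl.const_smul a⟩
      obtain ⟨u, hu, hju⟩ := hs n
      refine ⟨a • u, ?_, by rw [map_smul, hju]⟩
      have := SqLe.smul_pos (y := u) a hpos hu
      rwa [smul_zero] at this
  · intro x y hx hxy
    rw [hle] at hx hxy
    rw [sub_zero] at hx
    exact keyNorm x y hx hxy
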